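/- Let $\gamma > 0$, $1 < p < 2$, and let $\phi : (0,\infty) \to [0,\infty)$ be a non-decreasing function. Then for every $R > 0$, $\left( \int_0^R \left( \frac{\phi(r)}{r^{\gamma}} \right)^{\frac{1}{p-1}} \frac{dr}{r} \right)^{p-1} \leq c(p,\gamma) \int_0^{2R} \frac{\phi(r)}{r^{\gamma}} \frac{dr}{r}$ for a constant $c(p,\gamma)$ depending only on $p$ and $\gamma$. -/

import Mathlib

open MeasureTheory ENNReal Set

/-- elementary inequality for non-decreasing `φ` in the sublinear range
`1 < p < 2`. -/
theorem sublinear_elementary_inequality (γ p : ℝ) (hγ : 0 < γ) (hp1 : 1 < p) (hp2 : p < 2) :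
    ∃ c : ℝ, 0 < c ∧
      ∀ (φ : ℝ → ℝ), (∀ r, 0 < r → 0 ≤ φ r) → MonotoneOn φ (Set.Ioi (0:ℝ)) →
        ∀ R : ℝ, 0 < R →
          (∫⁻ r in Set.Ioo (0:ℝ) R,
              (ENNReal.ofReal (φ r / r ^ γ)) ^ (1 / (p - 1)) * (ENNReal.ofReal r)⁻¹)
            ^ (p - 1)
          ≤ ENNReal.ofReal c *
            ∫⁻ r in Set.Ioo (0:ℝ) (2 * R),
              ENNReal.ofReal (φ r / r ^ γ) * (ENNReal.ofReal r)⁻¹ := by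
  have hp1' : 0 < p - 1 := by linarith
  have h2p : (0:ℝ) ≤ 2 - p := by linarith
  have hq : 0 ≤ (2 - p) / (p - 1) := by positivity
  set c₁ : ℝ := (2:ℝ) ^ (γ + 1) with hc₁def
  have hc₁ : 0 < c₁ := by positivity
  refine ⟨c₁ ^ (2 - p), by positivity, ?_⟩
  intro φ hφ0 hφmono R hR
  set J := ∫⁻ r in Set.Ioo (0:ℝ) (2*R),
      ENNReal.ofReal (φ r / r ^ γ) * (ENNReal.ofReal r)⁻¹ with hJdef
  -- key pointwise bound: φ r / r^γ ≤ c₁ * J for r ∈ (0, R)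
  have key : ∀ r ∈ Set.Ioo (0:ℝ) R,
      ENNReal.ofReal (φ r / r ^ γ) ≤ ENNReal.ofReal c₁ * J := by
    intro r hr
    obtain ⟨hr0, hrR⟩ := hr
    have h2r : 0 < 2 * r := by linarith
    have h1 : (∫⁻ _s in Set.Ioo r (2*r),
        ENNReal.ofReal (φ r / ((2*r) ^ γ * (2*r)))) ≤ J := by
      calc (∫⁻ _s in Set.Ioo r (2*r), ENNReal.ofReal (φ r / ((2*r) ^ γ * (2*r))))
          ≤ ∫⁻ s in Set.Ioo r (2*r),
              ENNReal.ofReal (φ s / s ^ γ) * (ENNReal.ofReal s)⁻¹ := by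
            apply setLIntegral_mono' measurableSet_Ioo
            intro s hs
            have hs0 : 0 < s := lt_trans hr0 hs.1
            have heq : ENNReal.ofReal (φ s / s ^ γ) * (ENNReal.ofReal s)⁻¹
                = ENNReal.ofReal (φ s / s ^ γ / s) := by
              rw [ENNReal.ofReal_div_of_pos (x := φ s / s ^ γ) hs0]
              exact (div_eq_mul_inv _ _).symm
            rw [heq]
            apply ENNReal.ofReal_le_ofReal
            rw [div_div]
            have hφrs : φ r ≤ φ s :=
              hφmono (Set.mem_Ioi.2 hr0) (Set.mem_Ioi.2 hs0) hs.1.le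
            have hpow : s ^ γ * s ≤ (2*r) ^ γ * (2*r) := by
              apply mul_le_mul _ hs.2.le hs0.le (by positivity)
              exact Real.rpow_le_rpow hs0.le hs.2.le hγ.le
            exact div_le_div₀ (hφ0 s hs0) hφrs (by positivity) hpow
        _ ≤ J := by
            apply lintegral_mono_set
            intro s hs
            exact ⟨lt_trans hr0 hs.1, lt_of_lt_of_le hs.2 (by linarith)⟩
    have h2 : (∫⁻ _s in Set.Ioo r (2*r),
        ENNReal.ofReal (φ r / ((2*r) ^ γ * (2*r))))
        = ENNReal.ofReal (φ r / ((2*r) ^ γ * (2*r))) * ENNReal.ofReal r := by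
      rw [setLIntegral_const, Real.volume_Ioo]
      congr 1
      ring_nf
    have h3 : ENNReal.ofReal (φ r / r ^ γ)
        = ENNReal.ofReal c₁ *
          (ENNReal.ofReal (φ r / ((2*r) ^ γ * (2*r))) * ENNReal.ofReal r) := by
      have hnn : (0:ℝ) ≤ φ r / ((2*r)^γ*(2*r)) := div_nonneg (hφ0 r hr0) (by positivity)
      rw [← ENNReal.ofReal_mul hnn,
        ← ENNReal.ofReal_mul hc₁.le]
      congr 1
      have hrpow : (0:ℝ) < r ^ γ := Real.rpow_pos_of_pos hr0 γ
      have h2rγ : (2*r) ^ γ = 2 ^ γ * r ^ γ := Real.mul_rpow (by norm_num) hr0.le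
      have hc₁' : c₁ = 2 ^ γ * 2 := by
        rw [hc₁def, Real.rpow_add (by norm_num), Real.rpow_one]
      have h2γ : (0:ℝ) < (2:ℝ) ^ γ := Real.rpow_pos_of_pos (by norm_num) γ
      rw [h2rγ, hc₁']
      field_simp
    rw [h3]
    exact mul_le_mul_right (h2 ▸ h1) _
  -- Case J = ⊤
  by_cases hJtop : J = ⊤
  · rw [hJtop, ENNReal.mul_top (ENNReal.ofReal_pos.mpr (by positivity)).ne']
    exact le_top
  -- Case J = 0
  by_cases hJ0 : J = 0
  · have hI : (∫⁻ r in Set.Ioo (0:ℝ) R,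
        (ENNReal.ofReal (φ r / r ^ γ)) ^ (1 / (p - 1)) * (ENNReal.ofReal r)⁻¹) = 0 := by
      apply le_antisymm _ zero_le
      calc (∫⁻ r in Set.Ioo (0:ℝ) R,
            (ENNReal.ofReal (φ r / r ^ γ)) ^ (1 / (p - 1)) * (ENNReal.ofReal r)⁻¹)
          ≤ ∫⁻ _r in Set.Ioo (0:ℝ) R, (0:ℝ≥0∞) := by
            apply setLIntegral_mono' measurableSet_Ioo
            intro r hr
            have h0 : ENNReal.ofReal (φ r / r ^ γ) = 0 := by
              have := key r hr
              rw [hJ0, mul_zero] at this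
              exact le_antisymm this zero_le
            rw [h0, ENNReal.zero_rpow_of_pos (by positivity), zero_mul]
        _ = 0 := by simp
    rw [hI, ENNReal.zero_rpow_of_pos hp1']
    exact zero_le
  -- Main case: 0 < J < ⊤
  set K : ℝ≥0∞ := (ENNReal.ofReal c₁ * J) ^ ((2-p)/(p-1)) with hKdef
  have hKtop : K ≠ ⊤ :=
    ENNReal.rpow_ne_top_of_nonneg hq (ENNReal.mul_ne_top ENNReal.ofReal_ne_top hJtop)
  have step1 : (∫⁻ r in Set.Ioo (0:ℝ) R,
      (ENNReal.ofReal (φ r / r ^ γ)) ^ (1 / (p - 1)) * (ENNReal.ofReal r)⁻¹)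
      ≤ K * J := by
    calc (∫⁻ r in Set.Ioo (0:ℝ) R,
          (ENNReal.ofReal (φ r / r ^ γ)) ^ (1 / (p - 1)) * (ENNReal.ofReal r)⁻¹)
        ≤ ∫⁻ r in Set.Ioo (0:ℝ) R,
            K * (ENNReal.ofReal (φ r / r ^ γ) * (ENNReal.ofReal r)⁻¹) := by
          apply setLIntegral_mono' measurableSet_Ioo
          intro r hr
          have hx := key r hr
          have hbd : (ENNReal.ofReal (φ r / r ^ γ)) ^ (1 / (p - 1))
              ≤ K * ENNReal.ofReal (φ r / r ^ γ) := by
            have hsplit : 1/(p-1) = (2-p)/(p-1) + 1 := by field_simp; ring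
            rw [hsplit, ENNReal.rpow_add_of_nonneg _ _ hq zero_le_one, ENNReal.rpow_one]
            exact mul_le_mul_left (ENNReal.rpow_le_rpow hx hq) _
          calc (ENNReal.ofReal (φ r / r ^ γ)) ^ (1 / (p - 1)) * (ENNReal.ofReal r)⁻¹
              ≤ (K * ENNReal.ofReal (φ r / r ^ γ)) * (ENNReal.ofReal r)⁻¹ :=
                mul_le_mul_left hbd _
            _ = K * (ENNReal.ofReal (φ r / r ^ γ) * (ENNReal.ofReal r)⁻¹) := by
                rw [mul_assoc]
      _ = K * ∫⁻ r in Set.Ioo (0:ℝ) R,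
            ENNReal.ofReal (φ r / r ^ γ) * (ENNReal.ofReal r)⁻¹ :=
          lintegral_const_mul' _ _ hKtop
      _ ≤ K * J := by
          apply mul_le_mul_right
          apply lintegral_mono_set
          intro s hs
          exact ⟨hs.1, lt_of_lt_of_le hs.2 (by linarith)⟩
  calc (∫⁻ r in Set.Ioo (0:ℝ) R,
        (ENNReal.ofReal (φ r / r ^ γ)) ^ (1 / (p - 1)) * (ENNReal.ofReal r)⁻¹) ^ (p-1)
      ≤ (K * J) ^ (p-1) := ENNReal.rpow_le_rpow step1 hp1'.le
    _ = K ^ (p-1) * J ^ (p-1) := ENNReal.mul_rpow_of_nonneg _ _ hp1'.le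
    _ = (ENNReal.ofReal c₁ * J) ^ (2-p) * J ^ (p-1) := by
        rw [hKdef, ← ENNReal.rpow_mul, div_mul_cancel₀ _ hp1'.ne']
    _ = ENNReal.ofReal c₁ ^ (2-p) * (J ^ (2-p) * J ^ (p-1)) := by
        rw [ENNReal.mul_rpow_of_nonneg _ _ h2p, mul_assoc]
    _ = ENNReal.ofReal (c₁ ^ (2-p)) * J := by
        rw [← ENNReal.rpow_add _ _ hJ0 hJtop, ENNReal.ofReal_rpow_of_pos hc₁]
        norm_num
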